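/- The multiplication map Γ ⊗ Λ^{[2]} → Λ is an algebra isomorphism, where Γ is the subalgebra of symmetric functions generated by the odd q-functions q_1, q_3, q_5, … and Λ^{[2]} is the subalgebra generated by the e_r^{[2]}. In particular the elements e_r^{[2]} (r ≥ 1) are algebraically independent. -/

import Mathlib

open MvPolynomial

/-- The ring of symmetric functions over `k`, modelled as the polynomial ring on the
(algebraically independent) elementary symmetric functions: `symE k r` is `e_r`,
with `e_0 = 1` and `e_r = X (r-1)` for `r ≥ 1`. -/
noncomputable def symE (k : Type*) [Field k] : ℕ → MvPolynomial ℕ k :=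
  fun r => if r = 0 then 1 else X (r - 1)


theorem aeval_congr_of_supported {k : Type*} [CommSemiring k] {σ A : Type*} [CommSemiring A]
    [Algebra k A] {s : Set σ} {p : MvPolynomial σ k} (hp : p ∈ MvPolynomial.supported k s)
    {f g : σ → A} (hfg : ∀ i ∈ s, f i = g i) : aeval f p = aeval g p := by
  rw [MvPolynomial.mem_supported] at hp
  have := MvPolynomial.eval₂Hom_congr' (f₁ := algebraMap k A) (g₁ := f) (g₂ := g)
    (p₁ := p) (p₂ := p) rfl (fun i hi _ => hfg i (hp hi)) rfl
  simpa [MvPolynomial.aeval_def] using this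

noncomputable def invFam {k : Type*} [Field k] (G : ℕ → MvPolynomial ℕ k) (c : ℕ → k) :
    ℕ → MvPolynomial ℕ k
  | n => C (c n)⁻¹ * (X n -
      aeval (fun m => if _ : m < n then invFam G c m else 0) (G n - C (c n) * X n))

theorem triangular_bijective {k : Type*} [Field k] (G : ℕ → MvPolynomial ℕ k) (c : ℕ → k)
    (hc : ∀ n, c n ≠ 0)
    (hG : ∀ n, G n - C (c n) * X n ∈ MvPolynomial.supported k (Set.Iio n)) :
    Function.Bijective (aeval G : MvPolynomial ℕ k →ₐ[k] MvPolynomial ℕ k) := by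
  set t := invFam G c with ht_def
  have ht : ∀ n, aeval t (G n) = X n := by
    intro n
    have h1 : aeval (fun m => if _ : m < n then t m else 0) (G n - C (c n) * X n)
        = aeval t (G n - C (c n) * X n) := by
      refine aeval_congr_of_supported (hG n) ?_
      intro i hi
      simp [Set.mem_Iio.mp hi]
    have h2 : aeval t (G n) = aeval t (G n - C (c n) * X n) + C (c n) * t n := by
      simp [map_sub, sub_add, algebraMap_eq]
    rw [h2, ht_def, invFam, ← ht_def, h1, ← mul_assoc, ← C_mul,
      mul_inv_cancel₀ (hc n), C_1, one_mul]
    ring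
  have hid : ((aeval t).comp (aeval G) : MvPolynomial ℕ k →ₐ[k] MvPolynomial ℕ k)
      = AlgHom.id k _ := by
    apply MvPolynomial.algHom_ext
    intro n
    show (aeval t) ((aeval G) (X n)) = X n
    rw [aeval_X]; exact ht n
  constructor
  · intro a b hab
    have h1 := AlgHom.congr_fun hid a
    have h2 := AlgHom.congr_fun hid b
    simp only [AlgHom.comp_apply, AlgHom.id_apply] at h1 h2
    rw [← h1, ← h2, hab]
  · have hx : ∀ n, X n ∈ (aeval G : MvPolynomial ℕ k →ₐ[k] MvPolynomial ℕ k).range := by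
      intro n
      induction n using Nat.strong_induction_on with
      | _ n ih =>
        have hR : G n - C (c n) * X n ∈ (aeval G : MvPolynomial ℕ k →ₐ[k] _).range := by
          have hle : MvPolynomial.supported k (Set.Iio n)
              ≤ (aeval G : MvPolynomial ℕ k →ₐ[k] _).range := by
            rw [MvPolynomial.supported]
            apply Algebra.adjoin_le
            rintro _ ⟨m, hm, rfl⟩
            exact ih m hm
          exact hle (hG n)
        obtain ⟨p, hp⟩ := hR
        refine ⟨C (c n)⁻¹ * (X n - p), ?_⟩
        have hp' : aeval G p = G n - C (c n) * X n := hp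
        show (aeval G) (C (c n)⁻¹ * (X n - p)) = X n
        have : (aeval G) (C (c n)⁻¹ * (X n - p))
            = C (c n)⁻¹ * (G n - (G n - C (c n) * X n)) := by
          rw [map_mul, map_sub, hp', aeval_X, aeval_C, algebraMap_eq]
        rw [this, sub_sub_cancel, ← mul_assoc, ← C_mul, inv_mul_cancel₀ (hc n), C_1, one_mul]
    rw [← AlgHom.range_eq_top]
    rw [eq_top_iff, ← MvPolynomial.adjoin_range_X]
    apply Algebra.adjoin_le
    rintro _ ⟨n, rfl⟩
    exact hx n


section lemmas
variable {k : Type*} [Field k]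

theorem symE_zero : symE k 0 = 1 := if_pos rfl

theorem symE_succ (i : ℕ) : symE k (i + 1) = X i := by simp [symE]

theorem hmem (h : ℕ → MvPolynomial ℕ k) (hh0 : h 0 = 1)
    (hhe : ∀ m : ℕ, ∑ i ∈ Finset.range (m + 2),
      (-1 : MvPolynomial ℕ k) ^ i * symE k i * h (m + 1 - i) = 0) :
    ∀ n, h n ∈ MvPolynomial.supported k (Set.Iio n) := by
  intro n
  induction n using Nat.strong_induction_on with
  | _ n ih =>
    match n with
    | 0 => rw [hh0]; exact one_mem _
    | Nat.succ m =>
      have key := hhe m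
      rw [Finset.sum_range_succ'] at key
      simp only [pow_zero, symE_zero, one_mul, Nat.sub_zero] at key
      have hm1 : h (m + 1) = -∑ i ∈ Finset.range (m + 1),
          (-1 : MvPolynomial ℕ k) ^ (i + 1) * symE k (i + 1) * h (m + 1 - (i + 1)) := by
        linear_combination key
      rw [hm1]
      refine neg_mem (Subalgebra.sum_mem _ fun i hi => ?_)
      have hi' := Finset.mem_range.mp hi
      refine mul_mem (mul_mem (pow_mem (neg_mem (one_mem _)) _) ?_) ?_
      · rw [symE_succ]
        exact (MvPolynomial.X_mem_supported).mpr (by simp; omega)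
      · refine MvPolynomial.supported_mono ?_ (ih (m + 1 - (i + 1)) (by omega))
        intro x hx
        simp only [Set.mem_Iio] at hx ⊢
        omega

theorem hlead (h : ℕ → MvPolynomial ℕ k) (hh0 : h 0 = 1)
    (hhe : ∀ m : ℕ, ∑ i ∈ Finset.range (m + 2),
      (-1 : MvPolynomial ℕ k) ^ i * symE k i * h (m + 1 - i) = 0) :
    ∀ m, h (m + 1) - C ((-1 : k) ^ m) * X m ∈ MvPolynomial.supported k (Set.Iio m) := by
  intro m
  have key := hhe m
  rw [Finset.sum_range_succ', Finset.sum_range_succ] at key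
  simp only [pow_zero, symE_zero, one_mul, Nat.sub_zero, Nat.sub_self, Nat.add_sub_cancel, hh0, mul_one,
    symE_succ] at key
  have hm1 : h (m + 1) - C ((-1 : k) ^ m) * X m = -∑ i ∈ Finset.range m,
      (-1 : MvPolynomial ℕ k) ^ (i + 1) * X i * h (m + 1 - (i + 1)) := by
    rw [map_pow, map_neg, C_1]
    linear_combination key
  rw [hm1]
  refine neg_mem (Subalgebra.sum_mem _ fun i hi => ?_)
  have hi' := Finset.mem_range.mp hi
  refine mul_mem (mul_mem (pow_mem (neg_mem (one_mem _)) _) ?_) ?_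
  · exact (MvPolynomial.X_mem_supported).mpr (by simpa using hi')
  · refine MvPolynomial.supported_mono ?_ (hmem h hh0 hhe (m + 1 - (i + 1)))
    intro x hx
    simp only [Set.mem_Iio] at hx ⊢
    omega

theorem qlead (h q : ℕ → MvPolynomial ℕ k) (hh0 : h 0 = 1)
    (hhe : ∀ m : ℕ, ∑ i ∈ Finset.range (m + 2),
      (-1 : MvPolynomial ℕ k) ^ i * symE k i * h (m + 1 - i) = 0)
    (hq : ∀ r, q r = ∑ s ∈ Finset.range (r + 1), h s * symE k (r - s)) :
    ∀ r, q (2 * r + 1) - C (2 : k) * X (2 * r) ∈ MvPolynomial.supported k (Set.Iio (2 * r)) := by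
  intro r
  have key := hq (2 * r + 1)
  rw [Finset.sum_range_succ', Finset.sum_range_succ] at key
  simp only [hh0, one_mul, Nat.sub_zero, Nat.sub_self, symE_zero, mul_one] at key
  have e1 : (2 * r + 1 : ℕ) = (2 * r) + 1 := rfl
  rw [e1, symE_succ] at key
  have hC2 : (C (2 : k) : MvPolynomial ℕ k) = 2 := by
    rw [show (2 : k) = 1 + 1 by norm_num, map_add, C_1]; norm_num
  have hlead2r := hlead h hh0 hhe (2 * r)
  rw [show ((-1 : k) ^ (2 * r)) = 1 from Even.neg_one_pow ⟨r, by ring⟩, C_1, one_mul] at hlead2r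
  have hsplit : q (2 * r + 1) - C (2 : k) * X (2 * r) =
      (∑ s ∈ Finset.range (2 * r), h (s + 1) * symE k (2 * r + 1 - (s + 1)))
        + (h (2 * r + 1) - X (2 * r)) := by
    rw [hC2]
    linear_combination key
  rw [hsplit]
  refine add_mem (Subalgebra.sum_mem _ fun s hs => ?_) hlead2r
  have hs' := Finset.mem_range.mp hs
  refine mul_mem ?_ ?_
  · refine MvPolynomial.supported_mono ?_ (hmem h hh0 hhe (s + 1))
    intro x hx
    simp only [Set.mem_Iio] at hx ⊢
    omega
  · rw [show (2 * r + 1 - (s + 1) : ℕ) = (2 * r - s - 1) + 1 by omega, symE_succ]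
    exact (MvPolynomial.X_mem_supported).mpr (by simp; omega)

theorem esq_formula (esq : ℕ → MvPolynomial ℕ k)
    (hesq : ∀ r : ℕ,
      (PowerSeries.coeff (R := MvPolynomial ℕ k) (2 * r))
          (PowerSeries.mk (symE k) *
            PowerSeries.mk fun s => (-1 : MvPolynomial ℕ k) ^ s * symE k s) =
        (-1 : MvPolynomial ℕ k) ^ r * esq r) :
    ∀ r, esq r = (-1 : MvPolynomial ℕ k) ^ r *
      ∑ i ∈ Finset.range (2 * r + 1),
        symE k i * ((-1 : MvPolynomial ℕ k) ^ (2 * r - i) * symE k (2 * r - i)) := by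
  intro r
  have key := hesq r
  rw [PowerSeries.coeff_mul] at key
  simp only [PowerSeries.coeff_mk] at key
  rw [Finset.Nat.sum_antidiagonal_eq_sum_range_succ_mk] at key
  have h1 : (-1 : MvPolynomial ℕ k) ^ r * (-1 : MvPolynomial ℕ k) ^ r = 1 := by
    rw [← pow_add]; exact Even.neg_one_pow ⟨r, rfl⟩
  have key2 : (∑ i ∈ Finset.range (2 * r + 1),
      symE k i * ((-1 : MvPolynomial ℕ k) ^ (2 * r - i) * symE k (2 * r - i)))
        = (-1 : MvPolynomial ℕ k) ^ r * esq r := key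
  rw [key2, ← mul_assoc, h1, one_mul]

theorem esqlead (esq : ℕ → MvPolynomial ℕ k)
    (hesq : ∀ r : ℕ,
      (PowerSeries.coeff (R := MvPolynomial ℕ k) (2 * r))
          (PowerSeries.mk (symE k) *
            PowerSeries.mk fun s => (-1 : MvPolynomial ℕ k) ^ s * symE k s) =
        (-1 : MvPolynomial ℕ k) ^ r * esq r) :
    ∀ r, esq (r + 1) - C ((-1 : k) ^ (r + 1) * 2) * X (2 * r + 1)
      ∈ MvPolynomial.supported k (Set.Iio (2 * r + 1)) := by
  intro r
  have key := esq_formula esq hesq (r + 1)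
  simp only [show (2 * (r + 1) : ℕ) = 2 * r + 1 + 1 from by ring] at key
  rw [Finset.sum_range_succ, Finset.sum_range_succ'] at key
  simp only [Nat.sub_self, pow_zero, one_mul, mul_one, Nat.sub_zero, symE_zero, symE_succ] at key
  have heven : ((-1 : MvPolynomial ℕ k) ^ (2 * r + 1 + 1)) = 1 :=
    Even.neg_one_pow ⟨r + 1, by ring⟩
  rw [heven, one_mul] at key
  have hC2 : (C (2 : k) : MvPolynomial ℕ k) = 2 := by
    rw [show (2 : k) = 1 + 1 by norm_num, map_add, C_1]; norm_num
  have hsplit : esq (r + 1) - C ((-1 : k) ^ (r + 1) * 2) * X (2 * r + 1) =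
      (-1 : MvPolynomial ℕ k) ^ (r + 1) *
        ∑ i ∈ Finset.range (2 * r + 1),
          X i * ((-1 : MvPolynomial ℕ k) ^ (2 * r + 1 + 1 - (i + 1)) *
            symE k (2 * r + 1 + 1 - (i + 1))) := by
    rw [map_mul, map_pow, map_neg, C_1, hC2]
    linear_combination key
  rw [hsplit]
  refine mul_mem (pow_mem (neg_mem (one_mem _)) _) (Subalgebra.sum_mem _ fun i hi => ?_)
  have hi' := Finset.mem_range.mp hi
  refine mul_mem ((MvPolynomial.X_mem_supported).mpr (by simp; omega)) ?_
  refine mul_mem (pow_mem (neg_mem (one_mem _)) _) ?_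
  rw [show (2 * r + 1 + 1 - (i + 1) : ℕ) = (2 * r - i) + 1 by omega, symE_succ]
  exact (MvPolynomial.X_mem_supported).mpr (by simp)

end lemmas


set_option maxHeartbeats 1000000 in
set_option synthInstance.maxHeartbeats 1000000 in
/-- Let `k` be a field with `char k ≠ 2`, `Λ` the ring of symmetric functions,
`h` the complete symmetric functions (characterized by `e(-u)h(u)=1`),
`q r = Σ_{s=0}^r h_s e_{r-s}` Schur's q-functions, and `e_r^{[2]}` defined by
`e(u)e(-u) = Σ (-1)^r e_r^{[2]} u^{-2r}`.  Then the elements `e_r^{[2]}` (r ≥ 1) are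
algebraically independent, and multiplication `Γ ⊗ Λ^{[2]} → Λ` is an algebra isomorphism,
where `Γ` is the subalgebra generated by the odd q-functions `q_1, q_3, …` and `Λ^{[2]}` is
the subalgebra generated by the `e_r^{[2]}` (r ≥ 1). -/
theorem stmt4 (k : Type*) [Field k] (hk : ringChar k ≠ 2)
    (h q esq : ℕ → MvPolynomial ℕ k)
    (hh0 : h 0 = 1)
    (hhe : ∀ m : ℕ, ∑ i ∈ Finset.range (m + 2),
      (-1 : MvPolynomial ℕ k) ^ i * symE k i * h (m + 1 - i) = 0)
    (hq : ∀ r, q r = ∑ s ∈ Finset.range (r + 1), h s * symE k (r - s))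
    (hesq : ∀ r : ℕ,
      (PowerSeries.coeff (R := MvPolynomial ℕ k) (2 * r))
          (PowerSeries.mk (symE k) *
            PowerSeries.mk fun s => (-1 : MvPolynomial ℕ k) ^ s * symE k s) =
        (-1 : MvPolynomial ℕ k) ^ r * esq r) :
    AlgebraicIndependent k (fun r : ℕ => esq (r + 1)) ∧
      Function.Bijective
        (Algebra.TensorProduct.productMap
          (Algebra.adjoin k (Set.range fun r : ℕ => q (2 * r + 1))).val
          (Algebra.adjoin k (Set.range fun r : ℕ => esq (r + 1))).val) := by
  classical
  have h2k : (2 : k) ≠ 0 := by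
    intro h20
    have hdvd : ringChar k ∣ 2 :=
      (CharP.cast_eq_zero_iff k (ringChar k) 2).mp (by exact_mod_cast h20)
    have h1 : ringChar k ≠ 1 := CharP.char_ne_one k (ringChar k)
    rcases (Nat.dvd_prime Nat.prime_two).mp hdvd with hh | hh
    · exact h1 hh
    · exact hk hh
  set G : ℕ → MvPolynomial ℕ k := fun n => if Even n then q (n + 1) else esq (n / 2 + 1)
    with hG_def
  set c : ℕ → k := fun n => if Even n then 2 else (-1) ^ (n / 2 + 1) * 2 with hc_def
  have hnodd : ∀ m : ℕ, ¬ Even (2 * m + 1) := fun m => by rw [Nat.even_iff]; omega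
  have hGeven : ∀ m, G (2 * m) = q (2 * m + 1) := fun m => if_pos (even_two_mul m)
  have hGodd : ∀ m, G (2 * m + 1) = esq (m + 1) := by
    intro m
    show (if Even (2 * m + 1) then q (2 * m + 1 + 1) else esq ((2 * m + 1) / 2 + 1)) = esq (m + 1)
    rw [if_neg (hnodd m)]
    congr 2
    omega
  have hceven : ∀ m, c (2 * m) = 2 := fun m => if_pos (even_two_mul m)
  have hcodd : ∀ m, c (2 * m + 1) = (-1) ^ (m + 1) * 2 := by
    intro m
    show (if Even (2 * m + 1) then (2 : k) else (-1) ^ ((2 * m + 1) / 2 + 1) * 2) = _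
    rw [if_neg (hnodd m)]
    congr 3
    omega
  have hc : ∀ n, c n ≠ 0 := by
    intro n
    rcases Nat.even_or_odd n with he | ho
    · obtain ⟨m, rfl⟩ := he
      rw [show m + m = 2 * m by ring, hceven]; exact h2k
    · obtain ⟨m, rfl⟩ := ho
      rw [hcodd]
      exact mul_ne_zero (pow_ne_zero _ (neg_ne_zero.mpr one_ne_zero)) h2k
  have hGsupp : ∀ n, G n - C (c n) * X n ∈ MvPolynomial.supported k (Set.Iio n) := by
    intro n
    rcases Nat.even_or_odd n with he | ho
    · obtain ⟨m, rfl⟩ := he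
      rw [show m + m = 2 * m by ring, hGeven, hceven]
      exact qlead h q hh0 hhe hq m
    · obtain ⟨m, rfl⟩ := ho
      rw [hGodd, hcodd]
      exact esqlead esq hesq m
  have hbij := triangular_bijective G c hc hGsupp
  have haeval : ∀ p : MvPolynomial ℕ k,
      aeval (fun r : ℕ => esq (r + 1)) p = aeval G (rename (fun r : ℕ => 2 * r + 1) p) := by
    intro p
    have hcomp : (fun r : ℕ => esq (r + 1)) = G ∘ (fun r : ℕ => 2 * r + 1) := by
      funext r; exact (hGodd r).symm
    rw [aeval_rename, hcomp]
  constructor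
  · rw [algebraicIndependent_iff_injective_aeval]
    intro a b hab
    have hab' : aeval G (rename (fun r : ℕ => 2 * r + 1) a)
        = aeval G (rename (fun r : ℕ => 2 * r + 1) b) := by
      rw [← haeval, ← haeval]; exact hab
    exact rename_injective _ (fun x y hxy => by omega) (hbij.1 hab')
  · set A : ℕ → MvPolynomial ℕ k := fun r : ℕ => q (2 * r + 1) with hA_def
    set B : ℕ → MvPolynomial ℕ k := fun r : ℕ => esq (r + 1) with hB_def
    have hrange : ∀ F : ℕ → MvPolynomial ℕ k,
        (aeval F : MvPolynomial ℕ k →ₐ[k] MvPolynomial ℕ k).range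
          = Algebra.adjoin k (Set.range F) := by
      intro F
      rw [← Algebra.map_top, ← MvPolynomial.adjoin_range_X, AlgHom.map_adjoin,
        ← Set.range_comp]
      have hFX : (⇑(aeval F : MvPolynomial ℕ k →ₐ[k] MvPolynomial ℕ k) ∘ X) = F := by
        funext r; exact aeval_X F r
      rw [hFX]
    have hmemA : ∀ p, (aeval A : MvPolynomial ℕ k →ₐ[k] MvPolynomial ℕ k) p
        ∈ Algebra.adjoin k (Set.range A) := by
      intro p; rw [← hrange]; exact ⟨p, rfl⟩
    have hmemB : ∀ p, (aeval B : MvPolynomial ℕ k →ₐ[k] MvPolynomial ℕ k) p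
        ∈ Algebra.adjoin k (Set.range B) := by
      intro p; rw [← hrange]; exact ⟨p, rfl⟩
    set f : MvPolynomial ℕ k →ₐ[k] (Algebra.adjoin k (Set.range A)) :=
      (aeval A : MvPolynomial ℕ k →ₐ[k] MvPolynomial ℕ k).codRestrict _ hmemA with hf_def
    set g : MvPolynomial ℕ k →ₐ[k] (Algebra.adjoin k (Set.range B)) :=
      (aeval B : MvPolynomial ℕ k →ₐ[k] MvPolynomial ℕ k).codRestrict _ hmemB with hg_def
    have hfsurj : Function.Surjective f := by
      rintro ⟨y, hy⟩
      rw [← hrange] at hy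
      obtain ⟨x, hx⟩ := hy
      exact ⟨x, Subtype.ext hx⟩
    have hgsurj : Function.Surjective g := by
      rintro ⟨y, hy⟩
      rw [← hrange] at hy
      obtain ⟨x, hx⟩ := hy
      exact ⟨x, Subtype.ext hx⟩
    set M := Algebra.TensorProduct.map f g with hM_def
    have hMsurj : Function.Surjective M := by
      intro z
      induction z using TensorProduct.induction_on with
      | zero => exact ⟨0, map_zero _⟩
      | tmul a b =>
        obtain ⟨a', ha⟩ := hfsurj a
        obtain ⟨b', hb⟩ := hgsurj b
        exact ⟨a' ⊗ₜ b', by rw [hM_def, Algebra.TensorProduct.map_tmul, ha, hb]⟩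
      | add x y hx hy =>
        obtain ⟨x', hx'⟩ := hx
        obtain ⟨y', hy'⟩ := hy
        exact ⟨x' + y', by rw [map_add, hx', hy']⟩
    set Ψ : TensorProduct k (MvPolynomial ℕ k) (MvPolynomial ℕ k) →ₐ[k] MvPolynomial ℕ k :=
      Algebra.TensorProduct.productMap
        (rename (fun r : ℕ => 2 * r)) (rename (fun r : ℕ => 2 * r + 1)) with hΨ_def
    set D : ℕ → TensorProduct k (MvPolynomial ℕ k) (MvPolynomial ℕ k) :=
      fun n => if Even n then (X (n / 2)) ⊗ₜ[k] (1 : MvPolynomial ℕ k)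
        else (1 : MvPolynomial ℕ k) ⊗ₜ[k] (X (n / 2)) with hD_def
    have hDeven : ∀ m, D (2 * m) = (X m) ⊗ₜ[k] (1 : MvPolynomial ℕ k) := by
      intro m
      show (if Even (2 * m) then (X ((2 * m) / 2)) ⊗ₜ[k] (1 : MvPolynomial ℕ k)
        else (1 : MvPolynomial ℕ k) ⊗ₜ[k] (X ((2 * m) / 2))) = _
      rw [if_pos (even_two_mul m), show (2 * m) / 2 = m by omega]
    have hDodd : ∀ m, D (2 * m + 1) = (1 : MvPolynomial ℕ k) ⊗ₜ[k] (X m) := by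
      intro m
      show (if Even (2 * m + 1) then (X ((2 * m + 1) / 2)) ⊗ₜ[k] (1 : MvPolynomial ℕ k)
        else (1 : MvPolynomial ℕ k) ⊗ₜ[k] (X ((2 * m + 1) / 2))) = _
      rw [if_neg (hnodd m), show (2 * m + 1) / 2 = m by omega]
    set j : MvPolynomial ℕ k →ₐ[k] TensorProduct k (MvPolynomial ℕ k) (MvPolynomial ℕ k) :=
      aeval D with hj_def
    have hDj : ∀ n, Ψ (D n) = X n := by
      intro n
      rcases Nat.even_or_odd n with he | ho
      · obtain ⟨m, rfl⟩ := he
        rw [show m + m = 2 * m by ring, hDeven, hΨ_def,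
          Algebra.TensorProduct.productMap_apply_tmul, map_one, mul_one, rename_X]
      · obtain ⟨m, rfl⟩ := ho
        rw [hDodd, hΨ_def, Algebra.TensorProduct.productMap_apply_tmul, map_one, one_mul,
          rename_X]
    have hjl : ∀ a : MvPolynomial ℕ k,
        j (rename (fun r : ℕ => 2 * r) a) = a ⊗ₜ[k] (1 : MvPolynomial ℕ k) := by
      intro a
      rw [hj_def, aeval_rename]
      have h1 : ((D ∘ fun r : ℕ => 2 * r) : ℕ → _)
          = fun r : ℕ => (X r) ⊗ₜ[k] (1 : MvPolynomial ℕ k) := by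
        funext r; exact hDeven r
      rw [h1]
      have h2 : (Algebra.TensorProduct.includeLeft :
          MvPolynomial ℕ k →ₐ[k] TensorProduct k (MvPolynomial ℕ k) (MvPolynomial ℕ k))
          = aeval (fun r : ℕ => (X r) ⊗ₜ[k] (1 : MvPolynomial ℕ k)) := by
        refine (MvPolynomial.aeval_unique _).trans ?_
        congr 1
      rw [← h2]
      rfl
    have hjr : ∀ b : MvPolynomial ℕ k,
        j (rename (fun r : ℕ => 2 * r + 1) b) = (1 : MvPolynomial ℕ k) ⊗ₜ[k] b := by
      intro b
      rw [hj_def, aeval_rename]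
      have h1 : ((D ∘ fun r : ℕ => 2 * r + 1) : ℕ → _)
          = fun r : ℕ => (1 : MvPolynomial ℕ k) ⊗ₜ[k] (X r) := by
        funext r; exact hDodd r
      rw [h1]
      have h2 : (Algebra.TensorProduct.includeRight :
          MvPolynomial ℕ k →ₐ[k] TensorProduct k (MvPolynomial ℕ k) (MvPolynomial ℕ k))
          = aeval (fun r : ℕ => (1 : MvPolynomial ℕ k) ⊗ₜ[k] (X r)) := by
        refine (MvPolynomial.aeval_unique _).trans ?_
        congr 1
      rw [← h2]
      rfl
    have hjΨ : ∀ z, j (Ψ z) = z := by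
      intro z
      induction z using TensorProduct.induction_on with
      | zero => simp
      | tmul a b =>
        rw [hΨ_def, Algebra.TensorProduct.productMap_apply_tmul, map_mul,
          hjl, hjr, Algebra.TensorProduct.tmul_mul_tmul, mul_one, one_mul]
      | add x y hx hy => rw [map_add, map_add, hx, hy]
    have hΨj : ∀ p, Ψ (j p) = p := by
      intro p
      have hcompid : (Ψ.comp j : MvPolynomial ℕ k →ₐ[k] MvPolynomial ℕ k)
          = AlgHom.id k _ := by
        apply MvPolynomial.algHom_ext
        intro n
        show Ψ (j (X n)) = X n
        have : j (X n) = D n := aeval_X D n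
        rw [this]
        exact hDj n
      have := AlgHom.congr_fun hcompid p
      simpa using this
    have hΨbij : Function.Bijective Ψ :=
      Function.bijective_iff_has_inverse.mpr ⟨j, hjΨ, hΨj⟩
    have hΦ : ∀ z, Algebra.TensorProduct.productMap
        (aeval A : MvPolynomial ℕ k →ₐ[k] MvPolynomial ℕ k) (aeval B) z = aeval G (Ψ z) := by
      intro z
      induction z using TensorProduct.induction_on with
      | zero => simp
      | tmul a b =>
        rw [Algebra.TensorProduct.productMap_apply_tmul, hΨ_def,
          Algebra.TensorProduct.productMap_apply_tmul, map_mul, aeval_rename, aeval_rename,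
          show (G ∘ fun r : ℕ => 2 * r) = A from funext hGeven,
          show (G ∘ fun r : ℕ => 2 * r + 1) = B from funext hGodd]
      | add x y hx hy => simp only [map_add, hx, hy]
    have hΦbij : Function.Bijective
        (Algebra.TensorProduct.productMap
          (aeval A : MvPolynomial ℕ k →ₐ[k] MvPolynomial ℕ k) (aeval B)) := by
      have : ⇑(Algebra.TensorProduct.productMap
            (aeval A : MvPolynomial ℕ k →ₐ[k] MvPolynomial ℕ k) (aeval B))
          = ⇑(aeval G : MvPolynomial ℕ k →ₐ[k] MvPolynomial ℕ k) ∘ ⇑Ψ := funext hΦ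
      rw [this]
      exact hbij.comp hΨbij
    have hPM : ∀ z,
        (Algebra.TensorProduct.productMap
          (Algebra.adjoin k (Set.range A)).val (Algebra.adjoin k (Set.range B)).val) (M z)
        = Algebra.TensorProduct.productMap
            (aeval A : MvPolynomial ℕ k →ₐ[k] MvPolynomial ℕ k) (aeval B) z := by
      intro z
      induction z using TensorProduct.induction_on with
      | zero => simp
      | tmul a b =>
        rw [hM_def, Algebra.TensorProduct.map_tmul,
          Algebra.TensorProduct.productMap_apply_tmul,
          Algebra.TensorProduct.productMap_apply_tmul]
        rfl
      | add x y hx hy => simp only [map_add, hx, hy]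
    constructor
    · intro x y hxy
      obtain ⟨x', rfl⟩ := hMsurj x
      obtain ⟨y', rfl⟩ := hMsurj y
      rw [hPM, hPM] at hxy
      rw [hΦbij.1 hxy]
    · intro y
      obtain ⟨z, hz⟩ := hΦbij.2 y
      exact ⟨M z, by rw [hPM, hz]⟩
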